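/- Let n ≥ 3 be an integer and 1 ≤ l ≤ n−1. The function j_l := ∂U/∂y_l is a solution of the linearized problem: j_l is harmonic on the open half-space {y_n > 0}, it satisfies ∂j_l/∂y_n(ȳ, 0) + n · U(ȳ, 0)^{2/(n−2)} · j_l(ȳ, 0) = 0 for every ȳ ∈ ℝ^{n−1}, and both j_l and its gradient are square-integrable over ℝ^n_+ (i.e. j_l ∈ H¹(ℝ^n_+)). -/

import Mathlib

open MeasureTheory Set

/-- Points of `ℝ^n` written as `y = (ȳ, y_n)` with `ȳ ∈ ℝ^{n-1}`. -/
abbrev HalfSpacePt (n : ℕ) := EuclideanSpace ℝ (Fin (n - 1)) × ℝ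

/-- The standard bubble `U(y) = [(1+y_n)² + |ȳ|²]^{-(n-2)/2}`. -/
noncomputable def stdBubble (n : ℕ) (p : HalfSpacePt n) : ℝ :=
  ((1 + p.2) ^ 2 + ‖p.1‖ ^ 2) ^ (-(((n : ℝ) - 2) / 2))

/-- The `i`-th horizontal coordinate direction in `ℝ^{n-1} × ℝ`. -/
noncomputable def eH (n : ℕ) (i : Fin (n - 1)) : HalfSpacePt n := (EuclideanSpace.single i 1, 0)

/-- The vertical coordinate direction in `ℝ^{n-1} × ℝ`. -/
def eV (n : ℕ) : HalfSpacePt n := (0, 1)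

/-- Second derivative of `f` at `p` in the direction `v` (twice). -/
noncomputable def secondDeriv (n : ℕ) (f : HalfSpacePt n → ℝ) (v p : HalfSpacePt n) : ℝ :=
  fderiv ℝ (fun z => fderiv ℝ f z v) p v

/-- The Laplacian: sum of the pure second derivatives in the `n` coordinate directions. -/
noncomputable def lap (n : ℕ) (f : HalfSpacePt n → ℝ) (p : HalfSpacePt n) : ℝ :=
  (∑ i, secondDeriv n f (eH n i) p) + secondDeriv n f (eV n) p

/-- The closed upper half-space `ℝ^n_+`. -/
def upperHalfSpace (n : ℕ) : Set (HalfSpacePt n) := {p | 0 ≤ p.2}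

open Filter RealInnerProductSpace

namespace Stm

instance (n : ℕ) : (volume : Measure (HalfSpacePt n)).IsAddHaarMeasure :=
  (MeasureTheory.Measure.volume_eq_prod (EuclideanSpace ℝ (Fin (n - 1))) ℝ) ▸
    Measure.prod.instIsAddHaarMeasure _ _

variable {n : ℕ}

noncomputable def aa (n : ℕ) : ℝ := -(((n : ℝ) - 2) / 2)

noncomputable def S (p : HalfSpacePt n) : ℝ := (1 + p.2) ^ 2 + ‖p.1‖ ^ 2

noncomputable def DS (p : HalfSpacePt n) : HalfSpacePt n →L[ℝ] ℝ :=
  ((1 + p.2) • ContinuousLinearMap.snd ℝ (EuclideanSpace ℝ (Fin (n - 1))) ℝ +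
    (1 + p.2) • ContinuousLinearMap.snd ℝ (EuclideanSpace ℝ (Fin (n - 1))) ℝ) +
  2 • ((innerSL ℝ p.1).comp (ContinuousLinearMap.fst ℝ (EuclideanSpace ℝ (Fin (n - 1))) ℝ))

lemma DS_apply (p v : HalfSpacePt n) :
    DS p v = 2 * (1 + p.2) * v.2 + 2 * ⟪p.1, v.1⟫ := by
  simp [DS]; ring

lemma hasFDerivAt_S (p : HalfSpacePt n) : HasFDerivAt S (DS p) p := by
  have h0 : HasFDerivAt (fun q : HalfSpacePt n => 1 + q.2)
      (ContinuousLinearMap.snd ℝ _ _) p := (hasFDerivAt_snd).const_add 1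
  have h1 := h0.mul h0
  have h2 := (hasFDerivAt_fst (𝕜 := ℝ) (p := p)).norm_sq
  have e : S = fun q : HalfSpacePt n => (1 + q.2) * (1 + q.2) + ‖q.1‖ ^ 2 := by
    funext q; simp [S, sq]
  rw [e, DS]
  exact h1.add h2

lemma continuous_S : Continuous (S (n := n)) :=
  ((continuous_const.add continuous_snd).pow 2).add ((continuous_fst.norm).pow 2)

lemma isOpen_Spos : IsOpen {q : HalfSpacePt n | 0 < S q} :=
  isOpen_lt continuous_const continuous_S

lemma hasFDerivAt_rpowS (c : ℝ) {p : HalfSpacePt n} (hp : 0 < S p) :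
    HasFDerivAt (fun q => S q ^ c) ((c * S p ^ (c - 1)) • DS p) p :=
  (hasFDerivAt_S p).rpow_const (Or.inl hp.ne')

lemma stdBubble_eq : stdBubble n = fun q : HalfSpacePt n => S q ^ aa n := rfl

noncomputable def coordCLM (l : Fin (n - 1)) : HalfSpacePt n →L[ℝ] ℝ :=
  (EuclideanSpace.proj l).comp (ContinuousLinearMap.fst ℝ _ _)

lemma hasFDerivAt_coord (l : Fin (n - 1)) (p : HalfSpacePt n) :
    HasFDerivAt (fun q : HalfSpacePt n => q.1 l) (coordCLM l) p :=
  (coordCLM l).hasFDerivAt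

lemma coordCLM_apply (l : Fin (n - 1)) (v : HalfSpacePt n) : coordCLM l v = v.1 l := rfl

lemma fderiv_U_apply {p : HalfSpacePt n} (hp : 0 < S p) (v : HalfSpacePt n) :
    fderiv ℝ (stdBubble n) p v
      = aa n * S p ^ (aa n - 1) * (2 * (1 + p.2) * v.2 + 2 * ⟪p.1, v.1⟫) := by
  rw [stdBubble_eq, (hasFDerivAt_rpowS (aa n) hp).fderiv]
  simp [DS_apply]

noncomputable def F (n : ℕ) (l : Fin (n - 1)) (q : HalfSpacePt n) : ℝ :=
  2 * aa n * (q.1 l * S q ^ (aa n - 1))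

lemma inner_single_coord (l : Fin (n - 1)) (x : EuclideanSpace ℝ (Fin (n - 1))) :
    ⟪x, EuclideanSpace.single l (1:ℝ)⟫ = x l := by
  simp [EuclideanSpace.inner_single_right]

lemma fderiv_U_eH {p : HalfSpacePt n} (hp : 0 < S p) (l : Fin (n - 1)) :
    fderiv ℝ (stdBubble n) p (eH n l) = F n l p := by
  rw [fderiv_U_apply hp, F]
  simp [eH, inner_single_coord]
  ring

noncomputable def DF (n : ℕ) (l : Fin (n - 1)) (p : HalfSpacePt n) : HalfSpacePt n →L[ℝ] ℝ :=
  (2 * aa n) • (p.1 l • (((aa n - 1) * S p ^ (aa n - 1 - 1)) • DS p)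
    + (S p ^ (aa n - 1)) • coordCLM l)

lemma hasFDerivAt_F {p : HalfSpacePt n} (hp : 0 < S p) (l : Fin (n - 1)) :
    HasFDerivAt (F n l) (DF n l p) p :=
  ((hasFDerivAt_coord l p).mul (hasFDerivAt_rpowS (aa n - 1) hp)).const_mul (2 * aa n)

lemma DF_apply (l : Fin (n - 1)) (p v : HalfSpacePt n) :
    DF n l p v = 2 * aa n * ((aa n - 1) * p.1 l * S p ^ (aa n - 2)
        * (2 * (1 + p.2) * v.2 + 2 * ⟪p.1, v.1⟫)
      + S p ^ (aa n - 1) * v.1 l) := by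
  have e : aa n - 1 - 1 = aa n - 2 := by ring
  simp [DF, DS_apply, coordCLM_apply, e]
  ring

lemma fderiv_j_eq {p : HalfSpacePt n} (hp : 0 < S p) (l : Fin (n - 1)) :
    fderiv ℝ (fun q => fderiv ℝ (stdBubble n) q (eH n l)) p = DF n l p := by
  have hev : (fun q => fderiv ℝ (stdBubble n) q (eH n l)) =ᶠ[nhds p] F n l := by
    filter_upwards [isOpen_Spos.mem_nhds hp] with q hq
    exact fderiv_U_eH hq l
  rw [hev.fderiv_eq, (hasFDerivAt_F hp l).fderiv]

noncomputable def Gfun (n : ℕ) (l : Fin (n - 1)) (v : HalfSpacePt n) (q : HalfSpacePt n) : ℝ :=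
  2 * aa n * ((aa n - 1) * q.1 l * S q ^ (aa n - 2) * (2 * (1 + q.2) * v.2 + 2 * ⟪v.1, q.1⟫)
    + S q ^ (aa n - 1) * v.1 l)

lemma fderiv_j_apply_eq_Gfun {q : HalfSpacePt n} (hq : 0 < S q) (l : Fin (n - 1))
    (v : HalfSpacePt n) :
    fderiv ℝ (fun z => fderiv ℝ (stdBubble n) z (eH n l)) q v = Gfun n l v q := by
  rw [fderiv_j_eq hq l, DF_apply, Gfun, real_inner_comm]

lemma fderiv_Gfun_apply {p : HalfSpacePt n} (hp : 0 < S p) (l : Fin (n - 1))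
    (v w : HalfSpacePt n) :
    fderiv ℝ (Gfun n l v) p w =
      2 * aa n * ((aa n - 1) * w.1 l * S p ^ (aa n - 2)
          * (2 * (1 + p.2) * v.2 + 2 * ⟪v.1, p.1⟫)
        + (aa n - 1) * p.1 l * ((aa n - 2) * S p ^ (aa n - 3)
          * (2 * (1 + p.2) * w.2 + 2 * ⟪p.1, w.1⟫))
          * (2 * (1 + p.2) * v.2 + 2 * ⟪v.1, p.1⟫)
        + (aa n - 1) * p.1 l * S p ^ (aa n - 2) * (2 * w.2 * v.2 + 2 * ⟪v.1, w.1⟫)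
        + (aa n - 1) * S p ^ (aa n - 2) * (2 * (1 + p.2) * w.2 + 2 * ⟪p.1, w.1⟫)
          * v.1 l) := by
  have h0 : HasFDerivAt (fun q : HalfSpacePt n => 1 + q.2)
      (ContinuousLinearMap.snd ℝ _ _) p := (hasFDerivAt_snd).const_add 1
  have hC1 := (h0.const_mul 2).mul_const v.2
  have hC2 := (((innerSL ℝ v.1).comp
      (ContinuousLinearMap.fst ℝ (EuclideanSpace ℝ (Fin (n - 1))) ℝ)).hasFDerivAt
      (x := p)).const_mul 2
  have hC : HasFDerivAt (fun q : HalfSpacePt n => 2 * (1 + q.2) * v.2 + 2 * ⟪v.1, q.1⟫)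
      _ p := hC1.add hC2
  have hA := ((hasFDerivAt_coord l p).const_mul (aa n - 1)).mul (hasFDerivAt_rpowS (aa n - 2) hp)
  have hB := (hasFDerivAt_rpowS (aa n - 1) hp).mul_const (v.1 l)
  have h : HasFDerivAt (Gfun n l v) _ p := ((hA.mul hC).add hB).const_mul (2 * aa n)
  rw [h.fderiv]
  have e1 : aa n - 2 - 1 = aa n - 3 := by ring
  have e2 : aa n - 1 - 1 = aa n - 2 := by ring
  simp [DS_apply, coordCLM_apply, e1, e2]
  ring

lemma secondDeriv_eq {p : HalfSpacePt n} (hp : 0 < S p) (l : Fin (n - 1)) (v : HalfSpacePt n) :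
    fderiv ℝ (fun z => fderiv ℝ (fun q => fderiv ℝ (stdBubble n) q (eH n l)) z v) p
      = fderiv ℝ (Gfun n l v) p := by
  have hev : (fun z => fderiv ℝ (fun q => fderiv ℝ (stdBubble n) q (eH n l)) z v)
      =ᶠ[nhds p] Gfun n l v := by
    filter_upwards [isOpen_Spos.mem_nhds hp] with q hq
    exact fderiv_j_apply_eq_Gfun hq l v
  exact hev.fderiv_eq

lemma hs2 (x : EuclideanSpace ℝ (Fin (n - 1))) : ∑ i, x i * x i = ‖x‖ ^ 2 := by
  rw [EuclideanSpace.norm_sq_eq]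
  refine Finset.sum_congr rfl fun i _ => ?_
  rw [Real.norm_eq_abs, sq_abs, sq]

lemma secondH {p : HalfSpacePt n} (hp : 0 < S p) (l i : Fin (n - 1)) :
    fderiv ℝ (fun z => fderiv ℝ (fun q => fderiv ℝ (stdBubble n) q (eH n l)) z (eH n i)) p
        (eH n i)
      = (8 * aa n * (aa n - 1) * S p ^ (aa n - 2)) * (EuclideanSpace.single i (1:ℝ) l * p.1 i)
        + (8 * aa n * (aa n - 1) * (aa n - 2) * p.1 l * S p ^ (aa n - 3)) * (p.1 i * p.1 i)
        + 4 * aa n * (aa n - 1) * p.1 l * S p ^ (aa n - 2) := by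
  rw [secondDeriv_eq hp l, fderiv_Gfun_apply hp]
  simp [eH, EuclideanSpace.inner_single_left, EuclideanSpace.inner_single_right,
    EuclideanSpace.single_apply]
  rcases eq_or_ne l i with h | h <;> simp [h] <;> ring

lemma secondV {p : HalfSpacePt n} (hp : 0 < S p) (l : Fin (n - 1)) :
    fderiv ℝ (fun z => fderiv ℝ (fun q => fderiv ℝ (stdBubble n) q (eH n l)) z (eV n)) p (eV n)
      = 8 * aa n * (aa n - 1) * (aa n - 2) * p.1 l * S p ^ (aa n - 3) * (1 + p.2) ^ 2
        + 4 * aa n * (aa n - 1) * p.1 l * S p ^ (aa n - 2) := by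
  rw [secondDeriv_eq hp l, fderiv_Gfun_apply hp]
  simp [eV]
  ring

lemma lap_zero (hn : 3 ≤ n) {p : HalfSpacePt n} (hp : 0 < S p) (l : Fin (n - 1)) :
    (∑ i, fderiv ℝ (fun z => fderiv ℝ (fun q => fderiv ℝ (stdBubble n) q (eH n l)) z (eH n i))
        p (eH n i))
      + fderiv ℝ (fun z => fderiv ℝ (fun q => fderiv ℝ (stdBubble n) q (eH n l)) z (eV n)) p
        (eV n) = 0 := by
  have hcard : ((Finset.univ : Finset (Fin (n - 1))).card : ℝ) = (n : ℝ) - 1 := by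
    simp [Finset.card_univ]
    rw [Nat.cast_sub (by omega)]
    simp
  have hsum : (∑ i, fderiv ℝ
      (fun z => fderiv ℝ (fun q => fderiv ℝ (stdBubble n) q (eH n l)) z (eH n i)) p (eH n i))
      = (8 * aa n * (aa n - 1) * S p ^ (aa n - 2)) * p.1 l
        + (8 * aa n * (aa n - 1) * (aa n - 2) * p.1 l * S p ^ (aa n - 3)) * ‖p.1‖ ^ 2
        + ((n : ℝ) - 1) * (4 * aa n * (aa n - 1) * p.1 l * S p ^ (aa n - 2)) := by
    rw [Finset.sum_congr rfl (fun i _ => secondH hp l i)]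
    rw [Finset.sum_add_distrib, Finset.sum_add_distrib, ← Finset.mul_sum, ← Finset.mul_sum,
      Finset.sum_const, hs2, nsmul_eq_mul]
    have h1 : ∑ i, EuclideanSpace.single i (1:ℝ) l * p.1 i = p.1 l := by
      simp [EuclideanSpace.single_apply]
    rw [h1, hcard]
  rw [hsum, secondV hp l]
  have hS2 : S p ^ (aa n - 2) = S p ^ (aa n - 3) * S p := by
    rw [show aa n - 2 = aa n - 3 + 1 by ring, Real.rpow_add hp, Real.rpow_one]
  rw [hS2]
  rw [show S p = (1 + p.2) ^ 2 + ‖p.1‖ ^ 2 from rfl]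
  simp only [aa]
  ring

lemma boundary (hn : 3 ≤ n) (l : Fin (n - 1)) (z : EuclideanSpace ℝ (Fin (n - 1))) :
    fderiv ℝ (fun q => fderiv ℝ (stdBubble n) q (eH n l)) ((z, 0) : HalfSpacePt n) (eV n) +
      (n : ℝ) * stdBubble n (z, 0) ^ (2 / ((n : ℝ) - 2)) *
        fderiv ℝ (stdBubble n) (z, 0) (eH n l) = 0 := by
  have hne : ((n : ℝ) - 2) ≠ 0 := by
    have h3 : (3 : ℝ) ≤ (n : ℝ) := by exact_mod_cast hn
    intro h; linarith
  set p : HalfSpacePt n := (z, 0) with hpdef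
  have hp : 0 < S p := by
    have : S p = 1 + ‖z‖ ^ 2 := by simp [S, hpdef]
    rw [this]; positivity
  rw [fderiv_j_eq hp l, DF_apply, fderiv_U_eH hp l, F]
  have hpow : stdBubble n p ^ (2 / ((n : ℝ) - 2)) = S p ^ (-1 : ℝ) := by
    rw [stdBubble_eq]
    rw [← Real.rpow_mul hp.le]
    congr 1
    field_simp [aa]
    unfold aa; ring
  rw [hpow]
  have hS2 : S p ^ (aa n - 2) = S p ^ (aa n - 1) * S p ^ (-1 : ℝ) := by
    rw [← Real.rpow_add hp]; ring_nf
  rw [hS2]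
  have h1 : p.2 = 0 := rfl
  have h2 : (eV n).2 = 1 := rfl
  have h3 : ((eV n).1 : EuclideanSpace ℝ (Fin (n - 1))) = 0 := rfl
  have h4 : ((0 : EuclideanSpace ℝ (Fin (n - 1))) l) = 0 := rfl
  rw [h1, h2, h3, inner_zero_right, h4]
  simp only [aa]
  ring

lemma abs_coord_le (x : EuclideanSpace ℝ (Fin (n - 1))) (l : Fin (n - 1)) : |x l| ≤ ‖x‖ := by
  have h1 : x l = ⟪EuclideanSpace.single l (1 : ℝ), x⟫ := by
    simp [EuclideanSpace.inner_single_left]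
  rw [h1]
  calc |⟪EuclideanSpace.single l (1 : ℝ), x⟫| ≤ ‖EuclideanSpace.single l (1 : ℝ)‖ * ‖x‖ :=
        abs_real_inner_le_norm _ _
    _ = ‖x‖ := by simp [EuclideanSpace.norm_single]

lemma S_pos_of_mem {p : HalfSpacePt n} (hp2 : 0 ≤ p.2) : 0 < S p := by
  have h : (1 : ℝ) ≤ (1 + p.2) ^ 2 := by nlinarith
  have h2 : (0 : ℝ) ≤ ‖p.1‖ ^ 2 := sq_nonneg _
  unfold S; nlinarith

lemma S_lower {p : HalfSpacePt n} (hp2 : 0 ≤ p.2) : (1 + ‖p‖) ^ 2 ≤ 2 * S p := by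
  have h1 : ‖p‖ ≤ ‖p.1‖ + p.2 := by
    have ha : ‖p.1‖ ≤ ‖p.1‖ + p.2 := by linarith
    have hb : ‖p.2‖ ≤ ‖p.1‖ + p.2 := by
      rw [Real.norm_eq_abs, abs_of_nonneg hp2]; linarith [norm_nonneg p.1]
    calc ‖p‖ = max ‖p.1‖ ‖p.2‖ := rfl
      _ ≤ ‖p.1‖ + p.2 := max_le ha hb
  have h0 : (0 : ℝ) ≤ ‖p‖ := norm_nonneg p
  have h2 : (0 : ℝ) ≤ ‖p.1‖ := norm_nonneg p.1
  unfold S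
  nlinarith [sq_nonneg (1 + p.2 - ‖p.1‖)]

lemma Spow_le (c : ℝ) (hc : c ≤ 0) {p : HalfSpacePt n} (hp2 : 0 ≤ p.2) :
    S p ^ c ≤ 2 ^ (-c) * (1 + ‖p‖) ^ (2 * c) := by
  have hB : (0 : ℝ) < (1 + ‖p‖) ^ 2 / 2 := by positivity
  have hBS : (1 + ‖p‖) ^ 2 / 2 ≤ S p := by linarith [S_lower hp2]
  have h := Real.rpow_le_rpow_of_nonpos hB hBS hc
  refine h.trans_eq ?_
  rw [Real.div_rpow (sq_nonneg _) (by norm_num)]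
  rw [← Real.rpow_natCast (1 + ‖p‖) 2, ← Real.rpow_mul (by positivity)]
  rw [div_eq_mul_inv, ← Real.rpow_neg (by norm_num)]
  push_cast
  ring_nf

lemma sq_rpow (c : ℝ) {p : HalfSpacePt n} (hp : 0 < S p) :
    (S p ^ c) ^ 2 = S p ^ (2 * c) := by
  rw [← Real.rpow_natCast (S p ^ c) 2, ← Real.rpow_mul hp.le]
  push_cast; ring_nf

lemma le_half {x : ℝ} {p : HalfSpacePt n} (hp : 0 < S p) (hx0 : 0 ≤ x) (h : x ^ 2 ≤ S p) :
    x ≤ S p ^ ((1 : ℝ) / 2) := by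
  have hx : x = (x ^ 2) ^ ((1 : ℝ) / 2) := by
    rw [← Real.rpow_natCast x 2, ← Real.rpow_mul hx0]
    norm_num
  rw [hx]
  exact Real.rpow_le_rpow (sq_nonneg x) h (by norm_num)

lemma DF_norm_le {p : HalfSpacePt n} (hp : 0 < S p) (hp2 : 0 ≤ p.2) (l : Fin (n - 1)) :
    ‖DF n l p‖ ≤ (2 * |aa n| * (4 * |aa n - 1| + 1)) * S p ^ (aa n - 1) := by
  have hC : (0 : ℝ) ≤ (2 * |aa n| * (4 * |aa n - 1| + 1)) * S p ^ (aa n - 1) := by positivity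
  refine ContinuousLinearMap.opNorm_le_bound _ hC fun v => ?_
  rw [DF_apply]
  set half := S p ^ ((1 : ℝ) / 2) with hhalf
  have hhalf0 : (0 : ℝ) ≤ half := Real.rpow_nonneg hp.le _
  have h1t : 1 + p.2 ≤ half := by
    refine le_half hp (by linarith) ?_
    unfold S; nlinarith [sq_nonneg ‖p.1‖]
  have hx : ‖p.1‖ ≤ half := by
    refine le_half hp (norm_nonneg _) ?_
    unfold S; nlinarith [sq_nonneg (1 + p.2)]
  have hxl : |p.1 l| ≤ half := (abs_coord_le p.1 l).trans hx
  have hmul : half * half * S p ^ (aa n - 2) = S p ^ (aa n - 1) := by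
    rw [hhalf, ← Real.rpow_add hp, ← Real.rpow_add hp]
    ring_nf
  have hv1 : ‖v.1‖ ≤ ‖v‖ := norm_fst_le v
  have hv2 : |v.2| ≤ ‖v‖ := norm_snd_le v
  have hvl : |v.1 l| ≤ ‖v‖ := (abs_coord_le v.1 l).trans hv1
  have hDSv : |2 * (1 + p.2) * v.2 + 2 * ⟪p.1, v.1⟫| ≤ 4 * half * ‖v‖ := by
    have e1 : |2 * (1 + p.2) * v.2| ≤ 2 * half * ‖v‖ := by
      rw [abs_mul, abs_mul, abs_two, abs_of_nonneg (by linarith : (0:ℝ) ≤ 1 + p.2)]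
      exact mul_le_mul (by linarith) hv2 (abs_nonneg _) (by linarith)
    have e2 : |2 * ⟪p.1, v.1⟫| ≤ 2 * half * ‖v‖ := by
      rw [abs_mul, abs_two]
      have := abs_real_inner_le_norm p.1 v.1
      calc 2 * |⟪p.1, v.1⟫| ≤ 2 * (‖p.1‖ * ‖v.1‖) := by linarith
        _ ≤ 2 * (half * ‖v‖) := by
            apply mul_le_mul_of_nonneg_left _ (by norm_num)
            exact mul_le_mul hx hv1 (norm_nonneg _) hhalf0
        _ = 2 * half * ‖v‖ := by ring
    calc |2 * (1 + p.2) * v.2 + 2 * ⟪p.1, v.1⟫|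
        ≤ |2 * (1 + p.2) * v.2| + |2 * ⟪p.1, v.1⟫| := abs_add_le _ _
      _ ≤ 4 * half * ‖v‖ := by linarith
  have hrp2 : (0 : ℝ) ≤ S p ^ (aa n - 2) := Real.rpow_nonneg hp.le _
  have hrp1 : (0 : ℝ) ≤ S p ^ (aa n - 1) := Real.rpow_nonneg hp.le _
  have hX : |(aa n - 1) * p.1 l * S p ^ (aa n - 2)
      * (2 * (1 + p.2) * v.2 + 2 * ⟪p.1, v.1⟫)|
      ≤ 4 * |aa n - 1| * S p ^ (aa n - 1) * ‖v‖ := by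
    rw [abs_mul, abs_mul, abs_mul, abs_of_nonneg hrp2]
    calc |aa n - 1| * |p.1 l| * S p ^ (aa n - 2) * |2 * (1 + p.2) * v.2 + 2 * ⟪p.1, v.1⟫|
        ≤ |aa n - 1| * half * S p ^ (aa n - 2) * (4 * half * ‖v‖) := by
          apply mul_le_mul _ hDSv (abs_nonneg _) (by positivity)
          apply mul_le_mul_of_nonneg_right _ hrp2
          exact mul_le_mul_of_nonneg_left hxl (abs_nonneg _)
      _ = 4 * |aa n - 1| * (half * half * S p ^ (aa n - 2)) * ‖v‖ := by ring
      _ = 4 * |aa n - 1| * S p ^ (aa n - 1) * ‖v‖ := by rw [hmul]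
  have hY : |S p ^ (aa n - 1) * v.1 l| ≤ S p ^ (aa n - 1) * ‖v‖ := by
    rw [abs_mul, abs_of_nonneg hrp1]
    exact mul_le_mul_of_nonneg_left hvl hrp1
  rw [Real.norm_eq_abs]
  calc |2 * aa n * ((aa n - 1) * p.1 l * S p ^ (aa n - 2)
          * (2 * (1 + p.2) * v.2 + 2 * ⟪p.1, v.1⟫) + S p ^ (aa n - 1) * v.1 l)|
      = 2 * |aa n| * |(aa n - 1) * p.1 l * S p ^ (aa n - 2)
          * (2 * (1 + p.2) * v.2 + 2 * ⟪p.1, v.1⟫) + S p ^ (aa n - 1) * v.1 l| := by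
        rw [abs_mul, abs_mul, abs_two]
    _ ≤ 2 * |aa n| * (4 * |aa n - 1| * S p ^ (aa n - 1) * ‖v‖ + S p ^ (aa n - 1) * ‖v‖) := by
        have := (abs_add_le ((aa n - 1) * p.1 l * S p ^ (aa n - 2)
          * (2 * (1 + p.2) * v.2 + 2 * ⟪p.1, v.1⟫)) (S p ^ (aa n - 1) * v.1 l))
        apply mul_le_mul_of_nonneg_left _ (by positivity)
        linarith
    _ = (2 * |aa n| * (4 * |aa n - 1| + 1)) * S p ^ (aa n - 1) * ‖v‖ := by ring


lemma finrank_half (hn : 3 ≤ n) : (Module.finrank ℝ (HalfSpacePt n) : ℝ) = (n : ℝ) := by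
  rw [Module.finrank_prod, finrank_euclideanSpace_fin]
  simp
  rw [Nat.cast_sub (by omega)]
  ring

lemma measurableSet_uhs : MeasurableSet (upperHalfSpace n) :=
  (isClosed_le continuous_const continuous_snd).measurableSet

lemma haa_le (hn : 3 ≤ n) : aa n ≤ 0 := by
  have h3 : (3 : ℝ) ≤ (n : ℝ) := by exact_mod_cast hn
  simp only [aa]; linarith

lemma int1 (hn : 3 ≤ n) (l : Fin (n - 1)) :
    IntegrableOn (fun p : HalfSpacePt n => (fderiv ℝ (stdBubble n) p (eH n l)) ^ 2)
      (upperHalfSpace n) := by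
  have h3 : (3 : ℝ) ≤ (n : ℝ) := by exact_mod_cast hn
  have hr : (Module.finrank ℝ (HalfSpacePt n) : ℝ) < 2 * (n : ℝ) - 2 := by
    rw [finrank_half hn]; linarith
  have hmaj : Integrable (fun p : HalfSpacePt n =>
      (4 * aa n ^ 2 * 2 ^ (-(2 * aa n - 1))) * (1 + ‖p‖) ^ (-(2 * (n : ℝ) - 2))) :=
    (integrable_one_add_norm hr).const_mul _
  refine Integrable.mono' (hmaj.integrableOn)
    (((measurable_fderiv_apply_const ℝ (stdBubble n) (eH n l)).pow_const 2).aestronglyMeasurable)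
    ?_
  refine ae_restrict_of_forall_mem measurableSet_uhs fun p hp2 => ?_
  have hp2 : (0 : ℝ) ≤ p.2 := hp2
  have hp : 0 < S p := S_pos_of_mem hp2
  rw [Real.norm_eq_abs, abs_of_nonneg (sq_nonneg _), fderiv_U_eH hp l, F]
  have hb1 : (p.1 l) ^ 2 ≤ S p := by
    have h := abs_coord_le p.1 l
    have h2 : (p.1 l) ^ 2 ≤ ‖p.1‖ ^ 2 := by nlinarith [abs_nonneg (p.1 l), sq_abs (p.1 l)]
    unfold S; nlinarith [sq_nonneg (1 + p.2)]
  have hrp : (0 : ℝ) ≤ S p ^ (2 * (aa n - 1)) := Real.rpow_nonneg hp.le _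
  have step1 : (p.1 l) ^ 2 * S p ^ (2 * (aa n - 1)) ≤ S p ^ (2 * aa n - 1) := by
    have h := mul_le_mul_of_nonneg_right hb1 hrp
    have hs : S p * S p ^ (2 * (aa n - 1)) = S p ^ (2 * aa n - 1) := by
      rw [show S p * S p ^ (2 * (aa n - 1)) = S p ^ (1 : ℝ) * S p ^ (2 * (aa n - 1)) by
        rw [Real.rpow_one], ← Real.rpow_add hp]
      ring_nf
    rw [hs] at h; exact h
  have hc : 2 * aa n - 1 ≤ 0 := by linarith [haa_le hn]
  have step2 := Spow_le (2 * aa n - 1) hc hp2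
  have h2c : 2 * (2 * aa n - 1) = -(2 * (n : ℝ) - 2) := by simp only [aa]; ring
  rw [h2c] at step2
  calc (2 * aa n * (p.1 l * S p ^ (aa n - 1))) ^ 2
      = 4 * aa n ^ 2 * ((p.1 l) ^ 2 * (S p ^ (aa n - 1)) ^ 2) := by ring
    _ = 4 * aa n ^ 2 * ((p.1 l) ^ 2 * S p ^ (2 * (aa n - 1))) := by
        rw [sq_rpow _ hp]
    _ ≤ 4 * aa n ^ 2 * S p ^ (2 * aa n - 1) := by
        apply mul_le_mul_of_nonneg_left step1 (by positivity)
    _ ≤ 4 * aa n ^ 2 * (2 ^ (-(2 * aa n - 1)) * (1 + ‖p‖) ^ (-(2 * (n : ℝ) - 2))) :=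
        mul_le_mul_of_nonneg_left step2 (by positivity)
    _ = (4 * aa n ^ 2 * 2 ^ (-(2 * aa n - 1))) * (1 + ‖p‖) ^ (-(2 * (n : ℝ) - 2)) := by ring

lemma int2 (hn : 3 ≤ n) (l : Fin (n - 1)) :
    IntegrableOn (fun p : HalfSpacePt n =>
      ‖fderiv ℝ (fun q => fderiv ℝ (stdBubble n) q (eH n l)) p‖ ^ 2)
      (upperHalfSpace n) := by
  have h3 : (3 : ℝ) ≤ (n : ℝ) := by exact_mod_cast hn
  set C2 : ℝ := 2 * |aa n| * (4 * |aa n - 1| + 1) with hC2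
  have hC2nn : (0 : ℝ) ≤ C2 := by positivity
  have hr : (Module.finrank ℝ (HalfSpacePt n) : ℝ) < 2 * (n : ℝ) := by
    rw [finrank_half hn]; linarith
  have hmaj : Integrable (fun p : HalfSpacePt n =>
      (C2 ^ 2 * 2 ^ (-(2 * (aa n - 1)))) * (1 + ‖p‖) ^ (-(2 * (n : ℝ)))) :=
    (integrable_one_add_norm hr).const_mul _
  refine Integrable.mono' (hmaj.integrableOn)
    (((measurable_fderiv ℝ (fun q => fderiv ℝ (stdBubble n) q (eH n l))).norm.pow_const
      2).aestronglyMeasurable) ?_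
  refine ae_restrict_of_forall_mem measurableSet_uhs fun p hp2 => ?_
  have hp2 : (0 : ℝ) ≤ p.2 := hp2
  have hp : 0 < S p := S_pos_of_mem hp2
  rw [Real.norm_eq_abs, abs_of_nonneg (sq_nonneg _), fderiv_j_eq hp l]
  have hb := DF_norm_le hp hp2 l
  have hsq : ‖DF n l p‖ ^ 2 ≤ (C2 * S p ^ (aa n - 1)) ^ 2 :=
    pow_le_pow_left₀ (norm_nonneg _) hb 2
  have hc : 2 * (aa n - 1) ≤ 0 := by linarith [haa_le hn]
  have step2 := Spow_le (2 * (aa n - 1)) hc hp2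
  have h2c : 2 * (2 * (aa n - 1)) = -(2 * (n : ℝ)) := by simp only [aa]; ring
  rw [h2c] at step2
  calc ‖DF n l p‖ ^ 2 ≤ (C2 * S p ^ (aa n - 1)) ^ 2 := hsq
    _ = C2 ^ 2 * S p ^ (2 * (aa n - 1)) := by rw [mul_pow, sq_rpow _ hp]
    _ ≤ C2 ^ 2 * (2 ^ (-(2 * (aa n - 1))) * (1 + ‖p‖) ^ (-(2 * (n : ℝ)))) :=
        mul_le_mul_of_nonneg_left step2 (by positivity)
    _ = (C2 ^ 2 * 2 ^ (-(2 * (aa n - 1)))) * (1 + ‖p‖) ^ (-(2 * (n : ℝ))) := by ring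

end Stm

theorem stmt10 (n : ℕ) (hn : 3 ≤ n) (l : Fin (n - 1)) :
    (∀ p : HalfSpacePt n, 0 < p.2 →
        lap n (fun z => fderiv ℝ (stdBubble n) z (eH n l)) p = 0) ∧
    (∀ z : EuclideanSpace ℝ (Fin (n - 1)),
        fderiv ℝ (fun q => fderiv ℝ (stdBubble n) q (eH n l)) (z, 0) (eV n) +
          (n : ℝ) * stdBubble n (z, 0) ^ (2 / ((n : ℝ) - 2)) *
            fderiv ℝ (stdBubble n) (z, 0) (eH n l) = 0) ∧
    IntegrableOn (fun p : HalfSpacePt n => (fderiv ℝ (stdBubble n) p (eH n l)) ^ 2)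
      (upperHalfSpace n) ∧
    IntegrableOn
      (fun p : HalfSpacePt n => ‖fderiv ℝ (fun q => fderiv ℝ (stdBubble n) q (eH n l)) p‖ ^ 2)
      (upperHalfSpace n) := by
  refine ⟨fun p hp2 => ?_, Stm.boundary hn l, Stm.int1 hn l, Stm.int2 hn l⟩
  have hp : 0 < Stm.S p := Stm.S_pos_of_mem hp2.le
  simp only [lap, secondDeriv]
  exact Stm.lap_zero hn hp l
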